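/- Let A be an additive category such that for all objects X, Y the abelian group of morphisms Hom(X, Y) is finitely generated. Suppose X, Y are objects of A that are stably isomorphic, i.e., X ⊕ Z ≅ Y ⊕ Z for some object Z. Then X is a retract of Yⁿ for some n > 0: there exist morphisms f : X → Y^{⊕n} and g : Y^{⊕n} → X with g ∘ f = id_X. -/

import Mathlib

open CategoryTheory CategoryTheory.Limits

attribute [local instance] CategoryTheory.Limits.hasBinaryBiproducts_of_finite_biproducts

section Aux

variable {A : Type*} [Category A] [Preadditive A]

/-- The subgroup of `Hom(U, V)` of morphisms that are (sums of) composites through `Y`. -/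
def throughY (Y U V : A) : AddSubgroup (U ⟶ V) :=
  AddSubgroup.closure {w | ∃ (u : U ⟶ Y) (v : Y ⟶ V), w = u ≫ v}

lemma throughY.comp_mem (Y : A) {U V : A} (u : U ⟶ Y) (v : Y ⟶ V) :
    u ≫ v ∈ throughY Y U V :=
  AddSubgroup.subset_closure ⟨u, v, rfl⟩

lemma throughY.postcomp (Y : A) {U V W : A} {x : U ⟶ V} (hx : x ∈ throughY Y U V)
    (w : V ⟶ W) : x ≫ w ∈ throughY Y U W := by
  induction hx using AddSubgroup.closure_induction with
  | mem x hx =>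
    obtain ⟨u, v, rfl⟩ := hx
    rw [Category.assoc]
    exact throughY.comp_mem Y u (v ≫ w)
  | zero => simpa using (throughY Y U W).zero_mem
  | add x y hx hy px py =>
    rw [Preadditive.add_comp]
    exact add_mem px py
  | neg x hx px =>
    rw [Preadditive.neg_comp]
    exact neg_mem px

lemma throughY.precomp (Y : A) {U V W : A} {x : U ⟶ V} (hx : x ∈ throughY Y U V)
    (w : W ⟶ U) : w ≫ x ∈ throughY Y W V := by
  induction hx using AddSubgroup.closure_induction with
  | mem x hx =>
    obtain ⟨u, v, rfl⟩ := hx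
    rw [← Category.assoc]
    exact throughY.comp_mem Y (w ≫ u) v
  | zero => simpa using (throughY Y W V).zero_mem
  | add x y hx hy px py =>
    rw [Preadditive.comp_add]
    exact add_mem px py
  | neg x hx px =>
    rw [Preadditive.comp_neg]
    exact neg_mem px

lemma throughY.rep (Y : A) {U V : A} {x : U ⟶ V} (hx : x ∈ throughY Y U V) :
    ∃ (n : ℕ) (u : Fin n → (U ⟶ Y)) (v : Fin n → (Y ⟶ V)), x = ∑ i, u i ≫ v i := by
  induction hx using AddSubgroup.closure_induction with
  | mem x hx =>
    obtain ⟨u, v, rfl⟩ := hx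
    exact ⟨1, fun _ => u, fun _ => v, by simp⟩
  | zero => exact ⟨0, finZeroElim, finZeroElim, by simp⟩
  | add x y hx hy px py =>
    obtain ⟨n, u, v, rfl⟩ := px
    obtain ⟨m, u', v', rfl⟩ := py
    refine ⟨n + m, Fin.append u u', Fin.append v v', ?_⟩
    rw [Fin.sum_univ_add]
    simp [Fin.append_left, Fin.append_right]
  | neg x hx px =>
    obtain ⟨n, u, v, rfl⟩ := px
    refine ⟨n, fun i => -(u i), v, ?_⟩
    simp [Preadditive.neg_comp, Finset.sum_neg_distrib]

end Aux

set_option maxHeartbeats 1000000 in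
/-- In an additive category with finitely generated Hom groups, if `X` and `Y` are
stably isomorphic then `X` is a retract of `Y^{⊕n}` for some `n > 0`. -/
theorem stmt_4 {A : Type*} [Category A] [Preadditive A] [HasFiniteBiproducts A]
    (hfg : ∀ X Y : A, AddGroup.FG (X ⟶ Y))
    (X Y Z : A) (e : X ⊞ Z ≅ Y ⊞ Z) :
    ∃ (n : ℕ), 0 < n ∧ ∃ (f : X ⟶ ⨁ (fun _ : Fin n => Y))
      (g : ⨁ (fun _ : Fin n => Y) ⟶ X), f ≫ g = 𝟙 X := by
  classical
  -- Basic morphisms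
  set G : X ⊞ Z ⟶ Z := e.hom ≫ biprod.snd with hG
  set H : Z ⟶ X ⊞ Z := biprod.inr ≫ e.inv with hH
  have hHG : H ≫ G = 𝟙 Z := by
    simp [hG, hH]
  set T : X ⊞ Z ⟶ X ⊞ Z := (e.hom ≫ biprod.fst) ≫ (biprod.inl ≫ e.inv) with hTdef
  have hT : T ∈ throughY Y (X ⊞ Z) (X ⊞ Z) := throughY.comp_mem Y _ _
  have hGH : G ≫ H = 𝟙 (X ⊞ Z) - T := by
    have htot : (biprod.fst : Y ⊞ Z ⟶ Y) ≫ biprod.inl + biprod.snd ≫ biprod.inr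
        = 𝟙 (Y ⊞ Z) := biprod.total
    have : (biprod.snd : Y ⊞ Z ⟶ Z) ≫ biprod.inr
        = 𝟙 (Y ⊞ Z) - biprod.fst ≫ biprod.inl := by
      rw [← htot]; abel
    calc G ≫ H = e.hom ≫ (biprod.snd ≫ biprod.inr) ≫ e.inv := by
          simp [hG, hH]
      _ = e.hom ≫ (𝟙 (Y ⊞ Z) - biprod.fst ≫ biprod.inl) ≫ e.inv := by rw [this]
      _ = 𝟙 (X ⊞ Z) - T := by
          simp [hTdef, Preadditive.sub_comp, Preadditive.comp_sub]
  -- Noetherian setup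
  haveI : Module.Finite ℤ (Z ⟶ Z) := Module.Finite.iff_addGroup_fg.mpr (hfg Z Z)
  haveI : IsNoetherian ℤ (Z ⟶ Z) := isNoetherian_of_isNoetherianRing_of_finite ℤ (Z ⟶ Z)
  set K : Submodule ℤ (Z ⟶ Z) := (throughY Y Z Z).toIntSubmodule with hK
  have memK : ∀ x : Z ⟶ Z, x ∈ K ↔ x ∈ throughY Y Z Z := fun x => Iff.rfl
  -- the endomorphism s ↦ s ≫ (H ≫ biprod.snd)
  set w : Z ⟶ Z := H ≫ biprod.snd with hw
  set π₀ : (Z ⟶ Z) →ₗ[ℤ] (Z ⟶ Z) :=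
    (AddMonoidHom.mk' (fun s => s ≫ w) (fun a b => Preadditive.add_comp _ _ _ _ _ _)).toIntLinearMap
    with hπ₀
  have hπ₀apply : ∀ s : Z ⟶ Z, π₀ s = s ≫ w := fun s => rfl
  have hle : K ≤ K.comap π₀ := by
    intro s hs
    simp only [Submodule.mem_comap, hπ₀apply]
    exact throughY.postcomp Y hs w
  set π : ((Z ⟶ Z) ⧸ K) →ₗ[ℤ] ((Z ⟶ Z) ⧸ K) := Submodule.mapQ K K π₀ hle with hπ
  have hπapply : ∀ s : Z ⟶ Z, π (Submodule.Quotient.mk s) = Submodule.Quotient.mk (s ≫ w) :=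
    fun s => Submodule.mapQ_apply K K π₀ s
  -- π is surjective
  have hsurj : Function.Surjective π := by
    intro q
    obtain ⟨t, rfl⟩ := Submodule.Quotient.mk_surjective K q
    refine ⟨Submodule.Quotient.mk (t ≫ biprod.inr ≫ G), ?_⟩
    rw [hπapply]
    rw [Submodule.Quotient.eq]
    have hcomp : (t ≫ biprod.inr ≫ G) ≫ w = t - t ≫ biprod.inr ≫ T ≫ biprod.snd := by
      have : (t ≫ biprod.inr ≫ G) ≫ w = t ≫ biprod.inr ≫ (G ≫ H) ≫ biprod.snd := by
        simp [hw]
      rw [this, hGH]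
      simp [Preadditive.sub_comp, Preadditive.comp_sub]
    rw [hcomp]
    have : t - t ≫ biprod.inr ≫ T ≫ biprod.snd - t = -(t ≫ biprod.inr ≫ T ≫ biprod.snd) := by
      abel
    rw [this]
    refine neg_mem ?_
    rw [memK]
    simpa only [Category.assoc] using
      throughY.precomp Y (throughY.postcomp Y hT biprod.snd) (t ≫ biprod.inr)
  have hinj : Function.Injective π :=
    IsNoetherian.injective_of_surjective_endomorphism π hsurj
  -- the morphism m : Z ⟶ X
  set m : Z ⟶ X := H ≫ biprod.fst with hm
  have hs₀ : (m ≫ biprod.inl ≫ G) ∈ throughY Y Z Z := by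
    have h0 : π (Submodule.Quotient.mk (m ≫ biprod.inl ≫ G)) = π 0 := by
      rw [map_zero, hπapply]
      have hcomp : (m ≫ biprod.inl ≫ G) ≫ w = -(m ≫ biprod.inl ≫ T ≫ biprod.snd) := by
        have : (m ≫ biprod.inl ≫ G) ≫ w = m ≫ biprod.inl ≫ (G ≫ H) ≫ biprod.snd := by
          simp [hw]
        rw [this, hGH]
        simp [Preadditive.sub_comp, Preadditive.comp_sub]
      rw [hcomp]
      rw [show (0 : (Z ⟶ Z) ⧸ K) = Submodule.Quotient.mk 0 from rfl, Submodule.Quotient.eq]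
      rw [sub_zero]
      refine neg_mem ?_
      rw [memK]
      simpa only [Category.assoc] using
        throughY.precomp Y (throughY.postcomp Y hT biprod.snd) (m ≫ biprod.inl)
    have := hinj h0
    rw [show (0 : (Z ⟶ Z) ⧸ K) = Submodule.Quotient.mk 0 from rfl, Submodule.Quotient.eq,
      sub_zero] at this
    rw [memK] at this
    exact this
  -- m factors through Y (modulo nothing)
  have hmY : m ∈ throughY Y Z X := by
    have hdecomp : m = (m ≫ biprod.inl ≫ G) ≫ (H ≫ biprod.fst)
        + m ≫ biprod.inl ≫ T ≫ biprod.fst := by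
      have h1 : (m ≫ biprod.inl ≫ G) ≫ (H ≫ biprod.fst)
          = m ≫ biprod.inl ≫ (G ≫ H) ≫ biprod.fst := by simp
      rw [h1, hGH]
      simp [Preadditive.sub_comp, Preadditive.comp_sub]
    rw [hdecomp]
    refine add_mem (throughY.postcomp Y hs₀ _) ?_
    simpa only [Category.assoc] using
      throughY.precomp Y (throughY.postcomp Y hT biprod.fst) (m ≫ biprod.inl)
  -- the identity of X lies in the ideal of maps through Y
  have hid : 𝟙 X ∈ throughY Y X X := by
    have key : ∀ {U V : A} (a : U ⟶ Y ⊞ Z) (b : Y ⊞ Z ⟶ V),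
        a ≫ biprod.fst ≫ biprod.inl ≫ b + a ≫ biprod.snd ≫ biprod.inr ≫ b = a ≫ b := by
      intro U V a b
      calc a ≫ biprod.fst ≫ biprod.inl ≫ b + a ≫ biprod.snd ≫ biprod.inr ≫ b
          = a ≫ (biprod.fst ≫ biprod.inl + biprod.snd ≫ biprod.inr) ≫ b := by
            simp only [Preadditive.add_comp, Preadditive.comp_add, Category.assoc]
        _ = a ≫ b := by rw [biprod.total]; simp
    have hde : 𝟙 X = (biprod.inl ≫ e.hom ≫ biprod.fst) ≫ (biprod.inl ≫ e.inv ≫ biprod.fst)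
        + (biprod.inl ≫ e.hom ≫ biprod.snd) ≫ m := by
      rw [hm, hH]
      simp only [Category.assoc]
      have hkey := key (biprod.inl ≫ e.hom) (e.inv ≫ biprod.fst)
      simp only [Category.assoc] at hkey
      rw [hkey]
      simp
    rw [hde]
    exact add_mem (throughY.comp_mem Y _ _) (throughY.precomp Y hmY _)
  -- extract a finite sum representation
  obtain ⟨n, u, v, huv⟩ := throughY.rep Y hid
  refine ⟨n + 1, Nat.succ_pos n, biproduct.lift (Fin.snoc u 0), biproduct.desc (Fin.snoc v 0), ?_⟩
  rw [biproduct.lift_desc]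
  rw [Fin.sum_univ_castSucc]
  simp only [Fin.snoc_castSucc, Fin.snoc_last]
  rw [huv]
  simp
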